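/- Let G be a topological group and let μ ∈ Meas(rG) be a uniform measure. Then the map ν ↦ μ ⋆ ν from Meas(rG) to itself is continuous when Meas(rG) is equipped with the weak-* topology, i.e., the topology of pointwise convergence on Ub(rG). (In other words, every uniform measure belongs to the topological centre of the convolution algebra Meas(rG).) -/

import Mathlib

noncomputable section

open Filter Topology

/-- `f` is a bounded uniformly continuous real-valued function,
i.e. a member of `Ub(X)`. -/
def IsUb {X : Type*} [UniformSpace X] (f : X → ℝ) : Prop :=
  UniformContinuous f ∧ ∃ C : ℝ, ∀ x, |f x| ≤ C

/-- Supremum norm of a real-valued function. -/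
def supNorm {α : Type*} (f : α → ℝ) : ℝ :=
  sSup (Set.range fun x => |f x|)

/-- `μ` is (the restriction to `Ub(X)` of) a norm-continuous linear functional on `Ub(X)`,
i.e. a member of `Meas(X)`.  It is represented as a bare map on all functions;
only its values on `Ub(X)` are relevant. -/
def IsMeas {X : Type*} [UniformSpace X] (μ : (X → ℝ) → ℝ) : Prop :=
  (∀ f g : X → ℝ, IsUb f → IsUb g → μ (f + g) = μ f + μ g) ∧
  (∀ (c : ℝ) (f : X → ℝ), IsUb f → μ (c • f) = c * μ f) ∧
  (∃ C : ℝ, ∀ f : X → ℝ, IsUb f → (∀ x, |f x| ≤ 1) → |μ f| ≤ C)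

/-- The dual norm on `Meas(X)`:  `‖μ‖ = sup {|μ f| : f ∈ Ub(X), ‖f‖ ≤ 1}`. -/
def measNorm {X : Type*} [UniformSpace X] (μ : (X → ℝ) → ℝ) : ℝ :=
  sSup {r : ℝ | ∃ f : X → ℝ, IsUb f ∧ (∀ x, |f x| ≤ 1) ∧ r = |μ f|}

/-- `μ` is a positive functional:  `μ f ≥ 0` whenever `f ∈ Ub(X)` and `f ≥ 0`. -/
def IsPositive {X : Type*} [UniformSpace X] (μ : (X → ℝ) → ℝ) : Prop :=
  ∀ f : X → ℝ, IsUb f → (∀ x, 0 ≤ f x) → 0 ≤ μ f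

/-- `μ` is a *uniform measure*: on every norm-bounded uniformly equicontinuous set
`H ⊆ Ub(X)`, `μ` is continuous for the topology of pointwise convergence. -/
def IsUniformMeasure {X : Type*} [UniformSpace X] (μ : (X → ℝ) → ℝ) : Prop :=
  ∀ H : Set (X → ℝ),
    (∃ C : ℝ, ∀ f ∈ H, ∀ x, |f x| ≤ C) →
    H.UniformEquicontinuous →
    ∀ f₀ ∈ H, ∀ ε : ℝ, 0 < ε →
      ∃ (K : Finset X) (δ : ℝ), 0 < δ ∧
        ∀ f ∈ H, (∀ x ∈ K, |f x - f₀ x| < δ) → |μ f - μ f₀| < ε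

/-- A *semiuniform* function on `X × Y`, i.e. a member of `Ub(X ⋉ Y)` where `X ⋉ Y` is the
semiuniform product: `f` is bounded, the family of sections `x ↦ f (x, y)` (for `y ∈ Y`)
is uniformly equicontinuous on `X`, and every section `y ↦ f (x, y)` is uniformly
continuous on `Y`. -/
def Semiuniform {X Y : Type*} [UniformSpace X] [UniformSpace Y] (f : X × Y → ℝ) : Prop :=
  (∃ C : ℝ, ∀ p, |f p| ≤ C) ∧
  UniformEquicontinuous (fun y : Y => fun x : X => f (x, y)) ∧
  ∀ x : X, UniformContinuous fun y : Y => f (x, y)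

/-- The direct product `μ ⊗ ν`, evaluated at `f : X × Y → ℝ`:
`(μ ⊗ ν)(f) = μ (x ↦ ν (y ↦ f (x, y)))`. -/
def dirProd {X Y : Type*} (μ : (X → ℝ) → ℝ) (ν : (Y → ℝ) → ℝ) (f : X × Y → ℝ) : ℝ :=
  μ fun x => ν fun y => f (x, y)

/-- Convolution: `(μ ⋆ ν)(f) = μ (x ↦ ν (y ↦ f (x · y)))`. -/
def conv {G : Type*} [Mul G] (μ ν : (G → ℝ) → ℝ) : (G → ℝ) → ℝ :=
  fun f => μ fun x => ν fun y => f (x * y)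

/-- The weak-* topology on `Meas(X)`: the topology of pointwise convergence on `Ub(X)`. -/
def weakStarMeas (X : Type*) [UniformSpace X] :
    TopologicalSpace {ν : (X → ℝ) → ℝ // IsMeas ν} :=
  TopologicalSpace.induced
    (fun ν => fun f : {f : X → ℝ // IsUb f} => ν.1 f.1) Pi.topologicalSpace


section umAux
open Uniformity
variable {X : Type*} [UniformSpace X]

lemma um_isUb_zero : IsUb (0 : X → ℝ) :=
  ⟨uniformContinuous_const, 0, fun x => by simp⟩

lemma IsUb.add {f g : X → ℝ} (hf : IsUb f) (hg : IsUb g) : IsUb (f + g) := by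
  obtain ⟨hfu, Cf, hCf⟩ := hf; obtain ⟨hgu, Cg, hCg⟩ := hg
  refine ⟨hfu.add hgu, Cf + Cg, fun x => ?_⟩
  simp only [Pi.add_apply]
  exact (abs_add_le _ _).trans (add_le_add (hCf x) (hCg x))

lemma IsUb.smul {f : X → ℝ} (hf : IsUb f) (c : ℝ) : IsUb (c • f) := by
  obtain ⟨hfu, Cf, hCf⟩ := hf
  refine ⟨hfu.const_smul c, |c| * Cf, fun x => ?_⟩
  simp only [Pi.smul_apply, smul_eq_mul, abs_mul]
  exact mul_le_mul_of_nonneg_left (hCf x) (abs_nonneg c)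

lemma IsUb.sub {f g : X → ℝ} (hf : IsUb f) (hg : IsUb g) : IsUb (f - g) := by
  have := hf.add (hg.smul (-1))
  simpa [sub_eq_add_neg, neg_one_smul] using this

lemma um_isUb_sum {ι : Type*} (T : Finset ι) (q : ι → X → ℝ) (h : ∀ i ∈ T, IsUb (q i)) :
    IsUb (∑ i ∈ T, q i) := by
  classical
  induction T using Finset.induction_on with
  | empty => simpa using um_isUb_zero
  | insert _ _ hni ih =>
    rename_i a T'
    rw [Finset.sum_insert hni]
    exact (h a (Finset.mem_insert_self _ _)).add (ih fun i hi => h i (Finset.mem_insert_of_mem hi))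

variable {ν : (X → ℝ) → ℝ}

lemma IsMeas.zero' (hν : IsMeas ν) : ν 0 = 0 := by
  have h := hν.2.1 0 0 um_isUb_zero
  simpa using h

lemma IsMeas.sub' (hν : IsMeas ν) {f g : X → ℝ} (hf : IsUb f) (hg : IsUb g) :
    ν (f - g) = ν f - ν g := by
  have h1 : f - g = f + (-1 : ℝ) • g := by
    funext x; simp [sub_eq_add_neg]
  rw [h1, hν.1 f ((-1 : ℝ) • g) hf (hg.smul _), hν.2.1 (-1) g hg]
  ring

lemma IsMeas.sum' (hν : IsMeas ν) {ι : Type*} (T : Finset ι) (c : ι → ℝ) (q : ι → X → ℝ)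
    (hq : ∀ i ∈ T, IsUb (q i)) :
    ν (∑ i ∈ T, c i • q i) = ∑ i ∈ T, c i * ν (q i) := by
  classical
  induction T using Finset.induction_on with
  | empty => simpa using hν.zero'
  | insert _ _ hni ih =>
    rename_i a T'
    rw [Finset.sum_insert hni, Finset.sum_insert hni,
      hν.1 _ _ ((hq a (Finset.mem_insert_self _ _)).smul _)
        (um_isUb_sum T' _ fun i hi => (hq i (Finset.mem_insert_of_mem hi)).smul _),
      hν.2.1 _ _ (hq a (Finset.mem_insert_self _ _)),
      ih fun i hi => hq i (Finset.mem_insert_of_mem hi)]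

lemma IsMeas.bound' (hν : IsMeas ν) :
    ∃ C : ℝ, 0 ≤ C ∧ ∀ q : X → ℝ, IsUb q → ∀ b : ℝ, 0 ≤ b → (∀ x, |q x| ≤ b) → |ν q| ≤ C * b := by
  obtain ⟨C₀, hC₀⟩ := hν.2.2
  refine ⟨max C₀ 0, le_max_right _ _, fun q hq b hb hqb => ?_⟩
  rcases hb.eq_or_lt with hb0 | hb0
  · have hq0 : q = 0 := by
      funext x
      have := hqb x
      rw [← hb0] at this
      simpa using abs_nonpos_iff.1 this
    rw [hq0, hν.zero', ← hb0]
    simp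
  · have hqeq : q = b • (b⁻¹ • q) := by
      rw [smul_smul, mul_inv_cancel₀ hb0.ne', one_smul]
    have h1 : |ν (b⁻¹ • q)| ≤ C₀ := by
      refine hC₀ _ (hq.smul _) fun x => ?_
      simp only [Pi.smul_apply, smul_eq_mul, abs_mul, abs_inv, abs_of_pos hb0]
      rw [inv_mul_le_iff₀ hb0, mul_one]
      exact hqb x
    calc |ν q| = |b * ν (b⁻¹ • q)| := by
          conv_lhs => rw [hqeq]
          rw [hν.2.1 _ _ (hq.smul _)]
      _ = b * |ν (b⁻¹ • q)| := by rw [abs_mul, abs_of_pos hb0]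
      _ ≤ b * max C₀ 0 := mul_le_mul_of_nonneg_left (h1.trans (le_max_left _ _)) hb
      _ = max C₀ 0 * b := mul_comm _ _

end umAux

lemma um_dirac_approx {X : Type*} [UniformSpace X] [Nonempty X] {ν : (X → ℝ) → ℝ}
    (hν : IsMeas ν) {C : ℝ} (hC0 : 0 ≤ C)
    (hCb : ∀ q : X → ℝ, IsUb q → ∀ b : ℝ, 0 ≤ b → (∀ x, |q x| ≤ b) → |ν q| ≤ C * b)
    {ι : Type*} [Fintype ι] (p : ι → X → ℝ) (hp : ∀ j, IsUb (p j))
    {δ : ℝ} (hδ : 0 < δ) :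
    ∃ (T : Finset X) (c : X → ℝ), (∑ y ∈ T, |c y|) ≤ C ∧
      ∀ j, |(∑ y ∈ T, c y * p j y) - ν (p j)| < δ := by
  classical
  set s : Set (ι → ℝ) :=
    {w | ∃ (T : Finset X) (c : X → ℝ), (∑ y ∈ T, |c y|) ≤ C ∧ ∀ j, w j = ∑ y ∈ T, c y * p j y}
    with hs
  have hconv : Convex ℝ s := by
    rintro w₁ ⟨T₁, c₁, h₁, hw₁⟩ w₂ ⟨T₂, c₂, h₂, hw₂⟩ θ₁ θ₂ hθ₁ hθ₂ hθsum
    refine ⟨T₁ ∪ T₂,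
      fun y => θ₁ * (if y ∈ T₁ then c₁ y else 0) + θ₂ * (if y ∈ T₂ then c₂ y else 0), ?_, ?_⟩
    · calc (∑ y ∈ T₁ ∪ T₂, |θ₁ * (if y ∈ T₁ then c₁ y else 0) + θ₂ * (if y ∈ T₂ then c₂ y else 0)|)
          ≤ ∑ y ∈ T₁ ∪ T₂, (θ₁ * |if y ∈ T₁ then c₁ y else 0| + θ₂ * |if y ∈ T₂ then c₂ y else 0|) := by
            refine Finset.sum_le_sum fun y _ => ?_
            refine (abs_add_le _ _).trans ?_
            rw [abs_mul, abs_mul, abs_of_nonneg hθ₁, abs_of_nonneg hθ₂]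
      _ = θ₁ * (∑ y ∈ T₁, |c₁ y|) + θ₂ * (∑ y ∈ T₂, |c₂ y|) := by
            rw [Finset.sum_add_distrib, ← Finset.mul_sum, ← Finset.mul_sum]
            congr 1
            · congr 1
              simp only [apply_ite abs, abs_zero]
              rw [Finset.sum_ite_mem, Finset.union_inter_cancel_left]
            · congr 1
              simp only [apply_ite abs, abs_zero]
              rw [Finset.sum_ite_mem, Finset.union_inter_cancel_right]
      _ ≤ θ₁ * C + θ₂ * C := add_le_add (mul_le_mul_of_nonneg_left h₁ hθ₁)
            (mul_le_mul_of_nonneg_left h₂ hθ₂)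
      _ = C := by rw [← add_mul, hθsum, one_mul]
    · intro j
      have e1 : (∑ y ∈ T₁ ∪ T₂, (if y ∈ T₁ then c₁ y else 0) * p j y) = ∑ y ∈ T₁, c₁ y * p j y := by
        simp only [ite_mul, zero_mul]
        rw [Finset.sum_ite_mem, Finset.union_inter_cancel_left]
      have e2 : (∑ y ∈ T₁ ∪ T₂, (if y ∈ T₂ then c₂ y else 0) * p j y) = ∑ y ∈ T₂, c₂ y * p j y := by
        simp only [ite_mul, zero_mul]
        rw [Finset.sum_ite_mem, Finset.union_inter_cancel_right]
      have : ∀ y, (θ₁ * (if y ∈ T₁ then c₁ y else 0) + θ₂ * (if y ∈ T₂ then c₂ y else 0)) * p j y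
          = θ₁ * ((if y ∈ T₁ then c₁ y else 0) * p j y) + θ₂ * ((if y ∈ T₂ then c₂ y else 0) * p j y) := by
        intro y; ring
      simp only [Pi.add_apply, Pi.smul_apply, smul_eq_mul]
      rw [Finset.sum_congr rfl fun y _ => this y, Finset.sum_add_distrib,
        ← Finset.mul_sum, ← Finset.mul_sum, e1, e2, hw₁ j, hw₂ j]
  have htmem : (fun j => ν (p j)) ∈ closure s := by
    by_contra hnot
    obtain ⟨F, u, hFs, hFt⟩ :=
      geometric_hahn_banach_closed_point (hconv.closure) isClosed_closure hnot
    set a : ι → ℝ := fun j => F (Pi.single j (1 : ℝ)) with ha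
    have hFw : ∀ w : ι → ℝ, F w = ∑ j, a j * w j := by
      intro w
      have hw : w = ∑ j, (w j) • (Pi.single j (1 : ℝ) : ι → ℝ) := by
        funext i
        simp [Finset.sum_apply, Pi.single_apply]
      conv_lhs => rw [hw]
      rw [map_sum]
      refine Finset.sum_congr rfl fun j _ => ?_
      rw [map_smul]
      simp [ha, mul_comm]
    set q : X → ℝ := ∑ j, a j • p j with hqdef
    have hq : IsUb q := um_isUb_sum _ _ fun j _ => (hp j).smul _
    have hqx : ∀ x, q x = ∑ j, a j * p j x := by
      intro x; simp [hqdef, Finset.sum_apply]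
    have hνq : ν q = F (fun j => ν (p j)) := by
      rw [hqdef, hν.sum' _ _ _ fun j _ => hp j, hFw]
    have hsx : ∀ x : X, C * |q x| < u := by
      intro x
      have h1 : (fun j => C * p j x) ∈ s := by
        refine ⟨{x}, fun _ => C, by simp [abs_of_nonneg hC0], fun j => by simp⟩
      have h2 : (fun j => -C * p j x) ∈ s := by
        refine ⟨{x}, fun _ => -C, by simp [abs_of_nonneg hC0], fun j => by simp⟩
      have hF1 : C * q x < u := by
        have := hFs _ (subset_closure h1)
        rw [hFw] at this
        calc C * q x = ∑ j, a j * (C * p j x) := by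
              rw [hqx, Finset.mul_sum]; exact Finset.sum_congr rfl fun j _ => by ring
          _ < u := this
      have hF2 : -(C * q x) < u := by
        have := hFs _ (subset_closure h2)
        rw [hFw] at this
        calc -(C * q x) = ∑ j, a j * (-C * p j x) := by
              rw [hqx, Finset.mul_sum, ← Finset.sum_neg_distrib]
              exact Finset.sum_congr rfl fun j _ => by ring
          _ < u := this
      calc C * |q x| = |C * q x| := by rw [abs_mul, abs_of_nonneg hC0]
        _ < u := abs_lt.2 ⟨by linarith, hF1⟩
    have hu : 0 < u := lt_of_le_of_lt (by positivity) (hsx (Classical.arbitrary X))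
    have hνqt : u < ν q := by rw [hνq]; exact hFt
    rcases hC0.eq_or_lt with hC | hC
    · obtain ⟨_, Cq, hCq⟩ := id hq
      have hCq0 : 0 ≤ max Cq 0 := le_max_right _ _
      have := hCb q hq (max Cq 0) hCq0 fun x => (hCq x).trans (le_max_left _ _)
      rw [← hC, zero_mul] at this
      have := le_abs_self (ν q)
      linarith
    · have hb : ∀ x, |q x| ≤ u / C := fun x => (le_div_iff₀ hC).2 (by linarith [hsx x, mul_comm C |q x|])
      have hbnd := hCb q hq (u / C) (by positivity) hb
      rw [mul_div_cancel₀ _ hC.ne'] at hbnd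
      have := le_abs_self (ν q)
      linarith
  rw [Metric.mem_closure_iff] at htmem
  obtain ⟨w, ⟨T, c, hc, hw⟩, hdist⟩ := htmem δ hδ
  refine ⟨T, c, hc, fun j => ?_⟩
  have := (dist_pi_lt_iff hδ).1 hdist j
  rw [Real.dist_eq] at this
  rw [← hw j]
  rw [abs_sub_comm]
  exact this

section umGrp
open Uniformity
variable {G : Type*} [Group G] [TopologicalSpace G] [IsTopologicalGroup G]

attribute [local instance] IsTopologicalGroup.rightUniformSpace

lemma um_mem_unif {V : Set G} (hV : V ∈ 𝓝 (1 : G)) :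
    {p : G × G | p.2 / p.1 ∈ V} ∈ 𝓤 G := by
  rw [uniformity_eq_comap_nhds_one']
  simp only [← div_eq_mul_inv]
  exact preimage_mem_comap hV

lemma um_ucR_elim {f : G → ℝ} (hf : UniformContinuous f) {ε : ℝ} (hε : 0 < ε) :
    ∃ V ∈ 𝓝 (1 : G), ∀ a b : G, b / a ∈ V → |f b - f a| < ε := by
  have h : {p : G × G | dist (f p.1) (f p.2) < ε} ∈ 𝓤 G := hf (Metric.dist_mem_uniformity hε)
  rw [uniformity_eq_comap_nhds_one'] at h
  simp only [← div_eq_mul_inv] at h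
  obtain ⟨V, hV, hsub⟩ := Filter.mem_comap.1 h
  refine ⟨V, hV, fun a b hab => ?_⟩
  have := hsub (show ((a, b) : G × G) ∈ _ ⁻¹' V from hab)
  simpa [Real.dist_eq, abs_sub_comm] using this

lemma um_ucR_intro {g : G → ℝ}
    (h : ∀ ε : ℝ, 0 < ε → ∃ V ∈ 𝓝 (1 : G), ∀ a b : G, b / a ∈ V → |g b - g a| < ε) :
    UniformContinuous g := by
  rw [UniformContinuous, Metric.uniformity_basis_dist.tendsto_right_iff]
  intro ε hε
  obtain ⟨V, hV, hVf⟩ := h ε hε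
  filter_upwards [um_mem_unif hV] with p hp
  have := hVf p.1 p.2 hp
  simpa [Real.dist_eq, abs_sub_comm] using this

lemma um_uc_mul_right (y : G) : UniformContinuous (fun x : G => x * y) := by
  rw [UniformContinuous, uniformity_eq_comap_nhds_one', tendsto_comap_iff]
  simp only [← div_eq_mul_inv]
  have : ((fun p : G × G => p.2 / p.1) ∘ fun x : G × G => (x.1 * y, x.2 * y))
      = fun p : G × G => p.2 / p.1 := by
    funext p
    simp [div_eq_mul_inv, mul_inv_rev, mul_assoc]
  rw [this]
  exact tendsto_comap

lemma um_uc_mul_left (x : G) : UniformContinuous (fun y : G => x * y) := by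
  rw [UniformContinuous, uniformity_eq_comap_nhds_one', tendsto_comap_iff]
  simp only [← div_eq_mul_inv]
  have heq : ((fun p : G × G => p.2 / p.1) ∘ fun w : G × G => (x * w.1, x * w.2))
      = (fun w : G => x * w * x⁻¹) ∘ fun p : G × G => p.2 / p.1 := by
    funext p
    simp [div_eq_mul_inv, mul_inv_rev, mul_assoc]
  rw [heq]
  have hconj : Tendsto (fun w : G => x * w * x⁻¹) (𝓝 (1 : G)) (𝓝 (1 : G)) := by
    have hc : Continuous (fun w : G => x * w * x⁻¹) :=
      (continuous_const.mul continuous_id).mul continuous_const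
    have := hc.tendsto (1 : G)
    simpa using this
  exact hconj.comp tendsto_comap

lemma um_isUb_translR {f : G → ℝ} (hf : IsUb f) (y : G) : IsUb (fun x => f (x * y)) :=
  ⟨hf.1.comp (um_uc_mul_right y), hf.2.imp fun C hC x => hC _⟩

lemma um_isUb_translL {f : G → ℝ} (hf : IsUb f) (x : G) : IsUb (fun y => f (x * y)) :=
  ⟨hf.1.comp (um_uc_mul_left x), hf.2.imp fun C hC y => hC _⟩

lemma um_conj_nhds (x : G) {V : Set G} (hV : V ∈ 𝓝 (1 : G)) :
    (fun w : G => x * w * x⁻¹) ⁻¹' V ∈ 𝓝 (1 : G) := by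
  have hc : Continuous (fun w : G => x * w * x⁻¹) :=
    (continuous_const.mul continuous_id).mul continuous_const
  have ht : Tendsto (fun w : G => x * w * x⁻¹) (𝓝 (1 : G)) (𝓝 (1 : G)) := by
    have := hc.tendsto (1 : G); simpa using this
  exact ht hV


lemma um_isUb_g {μ : (G → ℝ) → ℝ} (hμ : IsMeas μ) (hUμ : IsUniformMeasure μ)
    {f : G → ℝ} (hf : IsUb f) :
    IsUb (fun y => μ (fun x => f (x * y))) := by
  classical
  obtain ⟨Cf, hCf⟩ := hf.2
  have hCf0 : 0 ≤ Cf := le_trans (abs_nonneg _) (hCf 1)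
  obtain ⟨Cm, hCm0, hCmb⟩ := hμ.bound'
  constructor
  case right =>
    exact ⟨Cm * Cf, fun y => hCmb _ (um_isUb_translR hf y) Cf hCf0 fun x => hCf _⟩
  case left =>
    apply um_ucR_intro
    intro ε hε
    set H' : Set (G → ℝ) :=
      {0} ∪ {h | ∃ y y' : G, h = fun x => f (x * y) - f (x * y')} with hH'
    have hmemH' : ∀ y y' : G, (fun x => f (x * y) - f (x * y')) ∈ H' :=
      fun y y' => Set.mem_union_right _ ⟨y, y', rfl⟩
    have hbd : ∃ C : ℝ, ∀ h ∈ H', ∀ x, |h x| ≤ C := by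
      refine ⟨2 * Cf, ?_⟩
      rintro h (rfl | ⟨y, y', rfl⟩) x
      · simpa using by linarith
      · calc |f (x * y) - f (x * y')| ≤ |f (x * y)| + |f (x * y')| := abs_sub _ _
          _ ≤ 2 * Cf := by linarith [hCf (x * y), hCf (x * y')]
    have hequi : H'.UniformEquicontinuous := by
      intro U hU
      obtain ⟨ε', hε', hball⟩ := Metric.mem_uniformity_dist.1 hU
      obtain ⟨V, hV, hVf⟩ := um_ucR_elim hf.1 (show (0:ℝ) < ε' / 2 by linarith)
      filter_upwards [um_mem_unif hV] with p hp
      rintro ⟨h, (rfl | ⟨y, y', rfl⟩)⟩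
      · exact hball (by simpa using hε')
      · apply hball
        rw [Real.dist_eq]
        have key : ∀ z : G, |f (p.1 * z) - f (p.2 * z)| < ε' / 2 := by
          intro z
          have hz : (p.2 * z) / (p.1 * z) ∈ V := by
            have : (p.2 * z) / (p.1 * z) = p.2 / p.1 := by
              simp [div_eq_mul_inv, mul_inv_rev, mul_assoc]
            rw [this]; exact hp
          have := hVf (p.1 * z) (p.2 * z) hz
          rwa [abs_sub_comm] at this
        have h1 := key y
        have h2 := key y'
        have hre : (f (p.1 * y) - f (p.1 * y')) - (f (p.2 * y) - f (p.2 * y'))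
            = (f (p.1 * y) - f (p.2 * y)) - (f (p.1 * y') - f (p.2 * y')) := by ring
        simp only []
        rw [hre]
        calc |(f (p.1 * y) - f (p.2 * y)) - (f (p.1 * y') - f (p.2 * y'))|
            ≤ |f (p.1 * y) - f (p.2 * y)| + |f (p.1 * y') - f (p.2 * y')| := abs_sub _ _
          _ < ε' := by linarith
    obtain ⟨K, δ, hδ, hKey⟩ := hUμ H' hbd hequi 0 (Set.mem_union_left _ rfl) ε hε
    obtain ⟨Vd, hVd, hVdf⟩ := um_ucR_elim hf.1 hδ
    refine ⟨⋂ x ∈ K, (fun w : G => x * w * x⁻¹) ⁻¹' Vd,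
      (Filter.biInter_finset_mem K).2 fun x _ => um_conj_nhds x hVd, ?_⟩
    intro a b hab
    have hmem : (fun x => f (x * b) - f (x * a)) ∈ H' := hmemH' b a
    have hsmall : ∀ x ∈ K, |(fun x => f (x * b) - f (x * a)) x - (0 : G → ℝ) x| < δ := by
      intro x hx
      have hx' : b / a ∈ (fun w : G => x * w * x⁻¹) ⁻¹' Vd := by
        have := Set.mem_iInter₂.1 hab x hx
        exact this
      have hd : (x * b) / (x * a) ∈ Vd := by
        have : (x * b) / (x * a) = x * (b / a) * x⁻¹ := by
          simp [div_eq_mul_inv, mul_inv_rev, mul_assoc]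
        rw [this]; exact hx'
      have := hVdf (x * a) (x * b) hd
      simpa using this
    have := hKey _ hmem hsmall
    rw [hμ.zero', sub_zero] at this
    have heq : μ (fun x => f (x * b) - f (x * a))
        = μ (fun x => f (x * b)) - μ (fun x => f (x * a)) := by
      have : (fun x => f (x * b) - f (x * a))
          = (fun x => f (x * b)) - (fun x => f (x * a)) := rfl
      rw [this]
      exact hμ.sub' (um_isUb_translR hf b) (um_isUb_translR hf a)
    rw [heq] at this
    exact this

lemma um_fubini {μ ν : (G → ℝ) → ℝ} (hμ : IsMeas μ) (hUμ : IsUniformMeasure μ)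
    (hν : IsMeas ν) {f : G → ℝ} (hf : IsUb f) :
    conv μ ν f = ν (fun y => μ (fun x => f (x * y))) := by
  classical
  have : Nonempty G := ⟨1⟩
  obtain ⟨Cf, hCf⟩ := hf.2
  have hCf0 : 0 ≤ Cf := le_trans (abs_nonneg _) (hCf 1)
  obtain ⟨Cν, hCν0, hCνb⟩ := hν.bound'
  set g : G → ℝ := fun y => μ (fun x => f (x * y)) with hgdef
  have hg : IsUb g := um_isUb_g hμ hUμ hf
  set hfun : G → ℝ := fun x => ν (fun y => f (x * y)) with hfundef
  have key : ∀ ε : ℝ, 0 < ε → |μ hfun - ν g| < ε := by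
    intro ε hε
    set H : Set (G → ℝ) := {h | (∀ x, |h x| ≤ Cν * Cf) ∧
      ∀ x x' : G, ∀ b : ℝ, 0 ≤ b → (∀ y, |f (x * y) - f (x' * y)| ≤ b)
        → |h x - h x'| ≤ Cν * b} with hHdef
    have hboundH : ∃ C : ℝ, ∀ h ∈ H, ∀ x, |h x| ≤ C := ⟨Cν * Cf, fun h hh x => hh.1 x⟩
    have hequiH : H.UniformEquicontinuous := by
      intro U hU
      obtain ⟨ε', hε', hball⟩ := Metric.mem_uniformity_dist.1 hU
      have hε'' : (0:ℝ) < ε' / (Cν + 1) := by positivity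
      obtain ⟨V, hV, hVf⟩ := um_ucR_elim hf.1 hε''
      filter_upwards [um_mem_unif hV] with p hp
      rintro ⟨h, hh⟩
      apply hball
      rw [Real.dist_eq]
      have hb : ∀ y, |f (p.1 * y) - f (p.2 * y)| ≤ ε' / (Cν + 1) := by
        intro y
        have hz : (p.2 * y) / (p.1 * y) ∈ V := by
          have : (p.2 * y) / (p.1 * y) = p.2 / p.1 := by
            simp [div_eq_mul_inv, mul_inv_rev, mul_assoc]
          rw [this]; exact hp
        have := hVf (p.1 * y) (p.2 * y) hz
        rw [abs_sub_comm] at this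
        exact this.le
      have := hh.2 p.1 p.2 (ε' / (Cν + 1)) hε''.le hb
      calc |h p.1 - h p.2| ≤ Cν * (ε' / (Cν + 1)) := this
        _ < (Cν + 1) * (ε' / (Cν + 1)) := by
            apply mul_lt_mul_of_pos_right _ hε''
            linarith
        _ = ε' := by field_simp
    have hνmem : hfun ∈ H := by
      constructor
      · exact fun x => hCνb _ (um_isUb_translL hf x) Cf hCf0 fun y => hCf _
      · intro x x' b hb hby
        have heq : hfun x - hfun x'
            = ν ((fun y => f (x * y)) - fun y => f (x' * y)) := by
          rw [hν.sub' (um_isUb_translL hf x) (um_isUb_translL hf x')]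
        rw [heq]
        refine hCνb _ ((um_isUb_translL hf x).sub (um_isUb_translL hf x')) b hb fun y => ?_
        simpa using hby y
    obtain ⟨K, δ, hδ, hKey⟩ := hUμ H hboundH hequiH hfun hνmem (ε / 2) (by linarith)
    have hδ₀ : (0:ℝ) < min δ (ε / 2) := lt_min hδ (by linarith)
    set p : Option {x // x ∈ K} → G → ℝ :=
      fun o => o.elim g (fun x => fun y => f (x.1 * y)) with hpdef
    have hp : ∀ j, IsUb (p j) := by
      rintro (_ | x)
      · exact hg
      · exact um_isUb_translL hf x.1
    obtain ⟨T, c, hcsum, happ⟩ := um_dirac_approx hν hCν0 hCνb p hp hδ₀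
    set hlam : G → ℝ := fun x => ∑ y ∈ T, c y * f (x * y) with hlamdef
    have hlammem : hlam ∈ H := by
      constructor
      · intro x
        calc |∑ y ∈ T, c y * f (x * y)| ≤ ∑ y ∈ T, |c y * f (x * y)| :=
              Finset.abs_sum_le_sum_abs _ _
          _ ≤ ∑ y ∈ T, |c y| * Cf := by
              refine Finset.sum_le_sum fun y _ => ?_
              rw [abs_mul]
              exact mul_le_mul_of_nonneg_left (hCf _) (abs_nonneg _)
          _ = (∑ y ∈ T, |c y|) * Cf := by rw [Finset.sum_mul]
          _ ≤ Cν * Cf := mul_le_mul_of_nonneg_right hcsum hCf0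
      · intro x x' b hb hby
        have heq : hlam x - hlam x' = ∑ y ∈ T, c y * (f (x * y) - f (x' * y)) := by
          rw [hlamdef]
          simp only []
          rw [← Finset.sum_sub_distrib]
          exact Finset.sum_congr rfl fun y _ => by ring
        rw [heq]
        calc |∑ y ∈ T, c y * (f (x * y) - f (x' * y))|
            ≤ ∑ y ∈ T, |c y * (f (x * y) - f (x' * y))| := Finset.abs_sum_le_sum_abs _ _
          _ ≤ ∑ y ∈ T, |c y| * b := by
              refine Finset.sum_le_sum fun y _ => ?_
              rw [abs_mul]
              exact mul_le_mul_of_nonneg_left (hby y) (abs_nonneg _)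
          _ = (∑ y ∈ T, |c y|) * b := by rw [Finset.sum_mul]
          _ ≤ Cν * b := mul_le_mul_of_nonneg_right hcsum hb
    have hKclose : ∀ x ∈ K, |hlam x - hfun x| < δ := by
      intro x hx
      have := happ (some ⟨x, hx⟩)
      have h2 : |hlam x - hfun x| < min δ (ε / 2) := by
        simpa [hpdef, hlamdef, hfundef] using this
      exact h2.trans_le (min_le_left _ _)
    have main1 : |μ hlam - μ hfun| < ε / 2 := hKey hlam hlammem hKclose
    have main2 : μ hlam = ∑ y ∈ T, c y * g y := by
      have heq : hlam = ∑ y ∈ T, c y • (fun x => f (x * y)) := by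
        funext x
        simp [hlamdef, Finset.sum_apply]
      rw [heq, hμ.sum' T c _ fun y _ => um_isUb_translR hf y]
    have main3 : |(∑ y ∈ T, c y * g y) - ν g| < ε / 2 := by
      have := happ none
      have h2 : |(∑ y ∈ T, c y * g y) - ν g| < min δ (ε / 2) := by
        simpa [hpdef] using this
      exact h2.trans_le (min_le_right _ _)
    have main4 : |μ hlam - ν g| < ε / 2 := by
      rw [show μ hlam - ν g = (∑ y ∈ T, c y * g y) - ν g from by rw [main2]]
      exact main3
    have tri : |μ hfun - ν g| ≤ |μ hfun - μ hlam| + |μ hlam - ν g| := abs_sub_le _ _ _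
    rw [abs_sub_comm (μ hlam)] at main1
    linarith
  have hconv : conv μ ν f = μ hfun := rfl
  rw [hconv]
  by_contra hne
  have habs : 0 < |μ hfun - ν g| := abs_pos.2 (sub_ne_zero.2 hne)
  exact absurd (key _ habs) (lt_irrefl _)
end umGrp

theorem stmt14 {G : Type*} [Group G] [TopologicalSpace G] [IsTopologicalGroup G] :
    letI : UniformSpace G := IsTopologicalGroup.rightUniformSpace G
    ∀ μ : (G → ℝ) → ℝ, IsMeas μ → IsUniformMeasure μ →
      @Continuous {ν : (G → ℝ) → ℝ // IsMeas ν} ({f : G → ℝ // IsUb f} → ℝ)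
        (weakStarMeas G) _
        (fun ν => fun f => conv μ ν.1 f.1) := by
  letI : UniformSpace G := IsTopologicalGroup.rightUniformSpace G
  intro μ hμ hUμ
  have key : (fun (ν : {ν : (G → ℝ) → ℝ // IsMeas ν}) => fun (f : {f : G → ℝ // IsUb f}) =>
        conv μ ν.1 f.1)
      = (fun (w : {f : G → ℝ // IsUb f} → ℝ) =>
          fun f : {f : G → ℝ // IsUb f} =>
            w ⟨fun y => μ (fun x => f.1 (x * y)), um_isUb_g hμ hUμ f.2⟩)
        ∘ (fun ν : {ν : (G → ℝ) → ℝ // IsMeas ν} =>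
            fun f : {f : G → ℝ // IsUb f} => ν.1 f.1) := by
    funext ν f
    exact um_fubini hμ hUμ ν.2 f.2
  have houter : Continuous (fun (w : {f : G → ℝ // IsUb f} → ℝ) =>
      fun f : {f : G → ℝ // IsUb f} =>
        w ⟨fun y => μ (fun x => f.1 (x * y)), um_isUb_g hμ hUμ f.2⟩) :=
    continuous_pi fun f => continuous_apply _
  rw [continuous_iff_le_induced, key, ← induced_compose]
  show TopologicalSpace.induced
      (fun ν : {ν : (G → ℝ) → ℝ // IsMeas ν} => fun f : {f : G → ℝ // IsUb f} => ν.1 f.1)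
      Pi.topologicalSpace ≤ _
  exact induced_mono (continuous_iff_le_induced.mp houter)
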